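/- Let γ ∈ [0,1), let K satisfy the standing kernel assumptions, and let ρ ∈ (γ,1). If h is a nonnegative Radon measure on [0,∞) with ∫_{[0,R]} dh ≤ R^{1−ρ} for all R > 0, then the function I[h](x) = ∫_0^x ∫_{x−y}^∞ (K(y,z)/z) dh(z) dh(y) is locally integrable on [0,∞): for every L < ∞ there is a constant C(L) with ∫_0^L I[h](x) dx ≤ C(L), and moreover ∫_B I[h](x) dx → 0 as the Lebesgue measure of B ⊆ [0,L] tends to 0. -/

import Mathlib

open MeasureTheory Real Set Filter Topology ENNReal

noncomputable section

namespace Smol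

/-- Standing assumptions on the coagulation kernel `K`: continuity on `(0,∞)²`, symmetry,
nonnegativity, homogeneity of degree `γ` and the growth bound `K(x,y) ≤ C(x^γ + y^γ)`. -/
structure KernelHyp (K : ℝ → ℝ → ℝ) (γ C : ℝ) : Prop where
  cont : ContinuousOn (fun p : ℝ × ℝ => K p.1 p.2) (Ioi (0:ℝ) ×ˢ Ioi (0:ℝ))
  symm : ∀ x y : ℝ, 0 < x → 0 < y → K x y = K y x
  nonneg : ∀ x y : ℝ, 0 < x → 0 < y → 0 ≤ K x y
  homog : ∀ a x y : ℝ, 0 < a → 0 < x → 0 < y → K (a * x) (a * y) = a ^ γ * K x y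
  growth : ∀ x y : ℝ, 0 < x → 0 < y → K x y ≤ C * (x ^ γ + y ^ γ)

/-- `I[h](x) = ∫_0^x ∫_{x-y}^∞ (K(y,z)/z) dh(z) dh(y)`, as a lower integral. -/
def Ilin (K : ℝ → ℝ → ℝ) (μ : Measure ℝ) (x : ℝ) : ℝ≥0∞ :=
  ∫⁻ y in Ioc (0:ℝ) x, (∫⁻ z in Ici (x - y), ENNReal.ofReal (K y z / z) ∂μ) ∂μ

/-! ### Auxiliary lemmas -/

lemma ofReal_tsum_geom (c r : ℝ) (hc : 0 ≤ c) (hr0 : 0 ≤ r) (hr1 : r < 1) :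
    ∑' k : ℕ, ENNReal.ofReal (c * r ^ k) = ENNReal.ofReal (c * (1 - r)⁻¹) := by
  rw [← ENNReal.ofReal_tsum_of_nonneg (fun k => mul_nonneg hc (pow_nonneg hr0 k))
      ((summable_geometric_of_lt_one hr0 hr1).mul_left c), tsum_mul_left,
    tsum_geometric_of_lt_one hr0 hr1]

lemma exists_dyadic {a z : ℝ} (ha : 0 < a) (hz : a ≤ z) :
    ∃ k : ℕ, 2 ^ k * a ≤ z ∧ z < 2 ^ (k + 1) * a := by
  have hex : ∃ n : ℕ, z < 2 ^ n * a := by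
    obtain ⟨n, hn⟩ := pow_unbounded_of_one_lt (z / a) (by norm_num : (1:ℝ) < 2)
    exact ⟨n, by rwa [div_lt_iff₀ ha] at hn⟩
  classical
  obtain ⟨k, hk⟩ : ∃ k, Nat.find hex = k + 1 := by
    refine Nat.exists_eq_succ_of_ne_zero fun h0 => ?_
    have hs := Nat.find_spec hex
    rw [h0] at hs
    simp only [pow_zero, one_mul] at hs
    linarith
  refine ⟨k, ?_, ?_⟩
  · have hmin := Nat.find_min hex (by omega : k < Nat.find hex)
    push_neg at hmin
    exact hmin
  · have hs := Nat.find_spec hex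
    rwa [hk] at hs

/-- Dyadic tail bound: `∫_{[a,∞)} z^{β-1} dμ ≤ D a^{β-ρ}` when `μ([0,R]) ≤ R^{1-ρ}`. -/
lemma tail_bound (μ : Measure ℝ) (ρ : ℝ) (hρ1 : ρ < 1)
    (hbd : ∀ R > (0:ℝ), μ (Icc 0 R) ≤ ENNReal.ofReal (R ^ (1 - ρ)))
    (β : ℝ) (hβρ : β < ρ) {a : ℝ} (ha : 0 < a) :
    ∫⁻ z in Ici a, ENNReal.ofReal (z ^ (β - 1)) ∂μ ≤
      ENNReal.ofReal (2 ^ (1 - ρ) * (1 - 2 ^ (β - ρ))⁻¹ * a ^ (β - ρ)) := by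
  set r : ℝ := 2 ^ (β - ρ) with hrdef
  have hr0 : 0 < r := Real.rpow_pos_of_pos two_pos _
  have hr1 : r < 1 := Real.rpow_lt_one_of_one_lt_of_neg one_lt_two (by linarith)
  have hterm : ∀ k : ℕ,
      ∫⁻ z in Ico (2 ^ k * a) (2 ^ (k + 1) * a), ENNReal.ofReal (z ^ (β - 1)) ∂μ
        ≤ ENNReal.ofReal (2 ^ (1 - ρ) * a ^ (β - ρ) * r ^ k) := by
    intro k
    set b : ℝ := 2 ^ k * a with hbdef
    have hb0 : 0 < b := by positivity
    have hc : (2:ℝ) ^ (k + 1) * a = 2 * b := by rw [hbdef]; ring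
    have hpow : ((2:ℝ) ^ k) ^ (β - ρ) = r ^ k := by
      rw [← Real.rpow_natCast (2:ℝ) k, ← Real.rpow_mul (by norm_num : (0:ℝ) ≤ 2),
        mul_comm, Real.rpow_mul (by norm_num : (0:ℝ) ≤ 2), Real.rpow_natCast]
    have key : b ^ (β - 1) * (2 * b) ^ (1 - ρ) = 2 ^ (1 - ρ) * a ^ (β - ρ) * r ^ k := by
      rw [Real.mul_rpow (by norm_num : (0:ℝ) ≤ 2) hb0.le]
      have h1 : b ^ (β - 1) * b ^ (1 - ρ) = b ^ (β - ρ) := by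
        rw [← Real.rpow_add hb0]; ring_nf
      have h2 : b ^ (β - ρ) = r ^ k * a ^ (β - ρ) := by
        rw [hbdef, Real.mul_rpow (by positivity) ha.le, hpow]
      calc b ^ (β - 1) * (2 ^ (1 - ρ) * b ^ (1 - ρ))
          = 2 ^ (1 - ρ) * (b ^ (β - 1) * b ^ (1 - ρ)) := by ring
        _ = 2 ^ (1 - ρ) * (r ^ k * a ^ (β - ρ)) := by rw [h1, h2]
        _ = 2 ^ (1 - ρ) * a ^ (β - ρ) * r ^ k := by ring
    calc ∫⁻ z in Ico b (2 ^ (k + 1) * a), ENNReal.ofReal (z ^ (β - 1)) ∂μ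
        ≤ ∫⁻ _ in Ico b (2 ^ (k + 1) * a), ENNReal.ofReal (b ^ (β - 1)) ∂μ := by
          refine setLIntegral_mono' measurableSet_Ico fun z hz => ?_
          exact ENNReal.ofReal_le_ofReal
            (Real.rpow_le_rpow_of_nonpos hb0 hz.1 (by linarith))
      _ = ENNReal.ofReal (b ^ (β - 1)) * μ (Ico b (2 ^ (k + 1) * a)) :=
          setLIntegral_const _ _
      _ ≤ ENNReal.ofReal (b ^ (β - 1)) * ENNReal.ofReal ((2 * b) ^ (1 - ρ)) := by
          gcongr
          refine le_trans (measure_mono ?_) (hbd (2 * b) (by positivity))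
          rw [hc]
          exact fun z hz => ⟨le_trans hb0.le hz.1, hz.2.le⟩
      _ = ENNReal.ofReal (b ^ (β - 1) * (2 * b) ^ (1 - ρ)) :=
          (ENNReal.ofReal_mul (Real.rpow_nonneg hb0.le _)).symm
      _ = ENNReal.ofReal (2 ^ (1 - ρ) * a ^ (β - ρ) * r ^ k) := by rw [key]
  calc ∫⁻ z in Ici a, ENNReal.ofReal (z ^ (β - 1)) ∂μ
      ≤ ∫⁻ z in ⋃ k : ℕ, Ico (2 ^ k * a) (2 ^ (k + 1) * a),
          ENNReal.ofReal (z ^ (β - 1)) ∂μ := by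
        refine lintegral_mono_set fun z hz => ?_
        obtain ⟨k, h1, h2⟩ := exists_dyadic ha hz
        exact mem_iUnion.2 ⟨k, h1, h2⟩
    _ ≤ ∑' k : ℕ, ∫⁻ z in Ico (2 ^ k * a) (2 ^ (k + 1) * a),
          ENNReal.ofReal (z ^ (β - 1)) ∂μ := lintegral_iUnion_le _ _
    _ ≤ ∑' k : ℕ, ENNReal.ofReal (2 ^ (1 - ρ) * a ^ (β - ρ) * r ^ k) :=
        ENNReal.tsum_le_tsum hterm
    _ = ENNReal.ofReal (2 ^ (1 - ρ) * a ^ (β - ρ) * (1 - r)⁻¹) :=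
        ofReal_tsum_geom _ r (by positivity) hr0.le hr1
    _ = ENNReal.ofReal (2 ^ (1 - ρ) * (1 - 2 ^ (β - ρ))⁻¹ * a ^ (β - ρ)) := by
        rw [← hrdef]; ring_nf

/-- `∫_{(y,T]} (x-y)^e dx ≤ (T-y)^{e+1}/(e+1)` for `e > -1`. -/
lemma lint_Ioc_rpow {e : ℝ} (he : -1 < e) (y T : ℝ) (hyT : y ≤ T) :
    ∫⁻ x in Ioc y T, ENNReal.ofReal ((x - y) ^ e) ≤
      ENNReal.ofReal ((T - y) ^ (e + 1) / (e + 1)) := by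
  have hint : IntervalIntegrable (fun x : ℝ => (x - y) ^ e) volume y T := by
    have h1 : IntervalIntegrable (fun t : ℝ => t ^ e) volume (0 : ℝ) (T - y) :=
      intervalIntegral.intervalIntegrable_rpow' he
    simpa using h1.comp_sub_right y
  have hIoc : IntegrableOn (fun x : ℝ => (x - y) ^ e) (Ioc y T) volume := hint.1
  have hnn : 0 ≤ᵐ[volume.restrict (Ioc y T)] fun x : ℝ => (x - y) ^ e := by
    refine (ae_restrict_iff' measurableSet_Ioc).2 (ae_of_all _ fun x hx => ?_)
    exact Real.rpow_nonneg (by linarith [hx.1]) e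
  rw [← ofReal_integral_eq_lintegral_ofReal hIoc hnn]
  apply ENNReal.ofReal_le_ofReal
  have h2 : ∫ x in Ioc y T, (x - y) ^ e = ∫ x in y..T, (x - y) ^ e :=
    (intervalIntegral.integral_of_le hyT).symm
  rw [h2, intervalIntegral.integral_comp_sub_right (fun t => t ^ e) y,
    show y - y = (0:ℝ) by ring, integral_rpow (Or.inl he),
    Real.zero_rpow (by linarith : e + 1 ≠ 0), sub_zero]

/-- Auxiliary integrand. -/
def philin (γ ρ : ℝ) (x y : ℝ) : ℝ≥0∞ :=
  ENNReal.ofReal ((x - y) ^ (0 - ρ)) + ENNReal.ofReal ((x - y) ^ (γ - ρ))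

/-- Auxiliary product-space integrand. -/
def psilin (γ ρ : ℝ) (E : ℝ≥0∞) (p : ℝ × ℝ) : ℝ≥0∞ :=
  Set.indicator {q : ℝ × ℝ | 0 < q.2 ∧ q.2 < q.1} (fun q => E * philin γ ρ q.1 q.2) p

/-- Auxiliary majorant of `Ilin`. -/
def glin (γ ρ : ℝ) (E : ℝ≥0∞) (μ : Measure ℝ) (x : ℝ) : ℝ≥0∞ :=
  ∫⁻ y, psilin γ ρ E (x, y) ∂μ

lemma psilin_meas (γ ρ : ℝ) (E : ℝ≥0∞) : Measurable (psilin γ ρ E) := by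
  refine Measurable.indicator ?_
    ((measurableSet_lt measurable_const measurable_snd).inter
      (measurableSet_lt measurable_snd measurable_fst))
  unfold philin
  fun_prop

lemma glin_eq (γ ρ : ℝ) (E : ℝ≥0∞) (μ : Measure ℝ) (x : ℝ) :
    glin γ ρ E μ x = ∫⁻ y in Ioo 0 x, E * philin γ ρ x y ∂μ := by
  rw [glin, ← lintegral_indicator measurableSet_Ioo]
  refine lintegral_congr fun y => ?_
  by_cases h : y ∈ Ioo (0:ℝ) x
  · rw [Set.indicator_of_mem h, psilin,
      Set.indicator_of_mem
        (show ((x, y) : ℝ × ℝ) ∈ {q : ℝ × ℝ | 0 < q.2 ∧ q.2 < q.1} from ⟨h.1, h.2⟩)]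
  · rw [Set.indicator_of_notMem h, psilin,
      Set.indicator_of_notMem (by simpa [mem_Ioo] using h)]

/-- Local integrability of `I[h]`: if `∫_{[0,R]} dh ≤ R^{1-ρ}` for all `R > 0`, then
`∫_0^L I[h] ≤ C(L)` for every `L`, and `∫_B I[h] → 0` as `|B| → 0`, `B ⊆ [0,L]`. -/
theorem Ih_locally_integrable
    (γ C ρ : ℝ) (K : ℝ → ℝ → ℝ)
    (hγ : γ ∈ Ico (0:ℝ) 1) (hC : 0 < C) (hK : KernelHyp K γ C) (hρ : ρ ∈ Ioo γ 1)
    (μ : Measure ℝ) (hsupp : μ (Iio 0) = 0)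
    (hbd : ∀ R > (0:ℝ), μ (Icc 0 R) ≤ ENNReal.ofReal (R ^ (1 - ρ))) :
    ∀ L > (0:ℝ),
      (∃ CL : ℝ, ∫⁻ x in Ioc (0:ℝ) L, Ilin K μ x ≤ ENNReal.ofReal CL) ∧
      (∀ ε > (0:ℝ), ∃ δ > (0:ℝ), ∀ B : Set ℝ, B ⊆ Icc (0:ℝ) L → MeasurableSet B →
        volume B ≤ ENNReal.ofReal δ →
        ∫⁻ x in B, Ilin K μ x ≤ ENNReal.ofReal ε) := by
  obtain ⟨hγ0, hγ1⟩ := hγ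
  obtain ⟨hργ, hρ1⟩ := hρ
  have hρ0 : 0 < ρ := lt_of_le_of_lt hγ0 hργ
  -- σ-finiteness of μ
  haveI hσ : SigmaFinite μ := by
    refine ⟨⟨⟨fun n => Iio 0 ∪ Icc 0 ((n : ℝ) + 1), fun _ => trivial, fun n => ?_, ?_⟩⟩⟩
    · refine lt_of_le_of_lt (measure_union_le _ _) ?_
      rw [hsupp, zero_add]
      exact lt_of_le_of_lt (hbd ((n : ℝ) + 1) (by positivity)) ENNReal.ofReal_lt_top
    · ext x
      simp only [mem_iUnion, mem_union, mem_Iio, mem_Icc, mem_univ, iff_true]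
      rcases lt_or_ge x 0 with h | h
      · exact ⟨0, Or.inl h⟩
      · obtain ⟨n, hn⟩ := exists_nat_ge x
        exact ⟨n, Or.inr ⟨h, by linarith⟩⟩
  intro L hL
  set D0 : ℝ := 2 ^ (1 - ρ) * (1 - 2 ^ (0 - ρ))⁻¹ with hD0def
  set Dγ : ℝ := 2 ^ (1 - ρ) * (1 - 2 ^ (γ - ρ))⁻¹ with hDγdef
  have h20 : (2:ℝ) ^ (0 - ρ) < 1 :=
    Real.rpow_lt_one_of_one_lt_of_neg one_lt_two (by linarith)
  have h2γ : (2:ℝ) ^ (γ - ρ) < 1 :=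
    Real.rpow_lt_one_of_one_lt_of_neg one_lt_two (by linarith)
  have hD0nn : 0 ≤ D0 :=
    mul_nonneg (Real.rpow_nonneg (by norm_num) _) (inv_nonneg.2 (by linarith))
  have hDγnn : 0 ≤ Dγ :=
    mul_nonneg (Real.rpow_nonneg (by norm_num) _) (inv_nonneg.2 (by linarith))
  set S : ℝ := C * L ^ γ * D0 + C * Dγ with hSdef
  have hSnn : 0 ≤ S := by
    have : (0:ℝ) ≤ L ^ γ := Real.rpow_nonneg hL.le _
    positivity
  set E : ℝ≥0∞ := ENNReal.ofReal S with hEdef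
  have hEne : E ≠ ∞ := ENNReal.ofReal_ne_top
  -- pointwise bound for non-atoms
  have hpoint : ∀ x, x ∈ Ioc (0:ℝ) L → μ {x} = 0 → Ilin K μ x ≤ glin γ ρ E μ x := by
    intro x hx hμx
    rw [glin_eq, Ilin]
    have hsetae : (Ioc (0:ℝ) x : Set ℝ) =ᵐ[μ] (Ioo (0:ℝ) x : Set ℝ) := by
      rw [ae_eq_set]
      constructor
      · rw [Ioc_sdiff_Ioo_same hx.1]; exact hμx
      · rw [diff_eq_empty.2 Ioo_subset_Ioc_self]; exact measure_empty
    rw [setLIntegral_congr hsetae]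
    refine setLIntegral_mono' measurableSet_Ioo fun y hy => ?_
    obtain ⟨hy0, hyx⟩ := hy
    have ha : 0 < x - y := by linarith
    have hyL : y ≤ L := le_trans hyx.le hx.2
    have hyγL : y ^ γ ≤ L ^ γ := Real.rpow_le_rpow hy0.le hyL hγ0
    calc ∫⁻ z in Ici (x - y), ENNReal.ofReal (K y z / z) ∂μ
        ≤ ∫⁻ z in Ici (x - y),
            (ENNReal.ofReal (C * y ^ γ) * ENNReal.ofReal (z ^ (0 - 1 : ℝ)) +
              ENNReal.ofReal C * ENNReal.ofReal (z ^ (γ - 1))) ∂μ := by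
          refine setLIntegral_mono' measurableSet_Ici fun z hz => ?_
          have hz0 : 0 < z := lt_of_lt_of_le ha hz
          have hKle : K y z / z ≤ C * y ^ γ * z ^ (0 - 1 : ℝ) + C * z ^ (γ - 1) := by
            have h1 : K y z / z ≤ C * (y ^ γ + z ^ γ) / z :=
              div_le_div_of_nonneg_right (hK.growth y z hy0 hz0) hz0.le
            have h2 : C * (y ^ γ + z ^ γ) / z
                = C * y ^ γ * z ^ (0 - 1 : ℝ) + C * z ^ (γ - 1) := by
              rw [show (0 - 1 : ℝ) = -1 by ring, Real.rpow_neg_one,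
                Real.rpow_sub hz0, Real.rpow_one]
              field_simp
            linarith
          refine le_trans (ENNReal.ofReal_le_ofReal hKle) (le_of_eq ?_)
          rw [ENNReal.ofReal_add
              (mul_nonneg (mul_nonneg hC.le (Real.rpow_nonneg hy0.le _))
                (Real.rpow_nonneg hz0.le _))
              (mul_nonneg hC.le (Real.rpow_nonneg hz0.le _)),
            ENNReal.ofReal_mul (mul_nonneg hC.le (Real.rpow_nonneg hy0.le _)),
            ENNReal.ofReal_mul (q := z ^ (γ - 1)) hC.le]
      _ = ENNReal.ofReal (C * y ^ γ) *
            (∫⁻ z in Ici (x - y), ENNReal.ofReal (z ^ (0 - 1 : ℝ)) ∂μ) +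
          ENNReal.ofReal C *
            (∫⁻ z in Ici (x - y), ENNReal.ofReal (z ^ (γ - 1)) ∂μ) := by
          rw [lintegral_add_left (by fun_prop),
            lintegral_const_mul' _ _ ENNReal.ofReal_ne_top,
            lintegral_const_mul' _ _ ENNReal.ofReal_ne_top]
      _ ≤ ENNReal.ofReal (C * y ^ γ) * ENNReal.ofReal (D0 * (x - y) ^ (0 - ρ)) +
          ENNReal.ofReal C * ENNReal.ofReal (Dγ * (x - y) ^ (γ - ρ)) := by
          gcongr
          · exact tail_bound μ ρ hρ1 hbd 0 hρ0 ha
          · exact tail_bound μ ρ hρ1 hbd γ hργ ha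
      _ ≤ E * philin γ ρ x y := by
          rw [← ENNReal.ofReal_mul (mul_nonneg hC.le (Real.rpow_nonneg hy0.le _)),
            ← ENNReal.ofReal_mul hC.le]
          have ht0 : (0:ℝ) ≤ (x - y) ^ (0 - ρ) := Real.rpow_nonneg ha.le _
          have htγ : (0:ℝ) ≤ (x - y) ^ (γ - ρ) := Real.rpow_nonneg ha.le _
          have hc1 : C * y ^ γ * (D0 * (x - y) ^ (0 - ρ)) ≤ S * (x - y) ^ (0 - ρ) := by
            have hbase : C * y ^ γ * D0 ≤ S := by
              rw [hSdef]
              have h1 : C * y ^ γ * D0 ≤ C * L ^ γ * D0 := by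
                have := mul_le_mul_of_nonneg_right
                  (mul_le_mul_of_nonneg_left hyγL hC.le) hD0nn
                linarith
              nlinarith [mul_nonneg hC.le hDγnn]
            calc C * y ^ γ * (D0 * (x - y) ^ (0 - ρ))
                = (C * y ^ γ * D0) * (x - y) ^ (0 - ρ) := by ring
              _ ≤ S * (x - y) ^ (0 - ρ) := mul_le_mul_of_nonneg_right hbase ht0
          have hc2 : C * (Dγ * (x - y) ^ (γ - ρ)) ≤ S * (x - y) ^ (γ - ρ) := by
            have hbase : C * Dγ ≤ S := by
              rw [hSdef]
              have h1 : (0:ℝ) ≤ L ^ γ := Real.rpow_nonneg hL.le _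
              nlinarith [mul_nonneg (mul_nonneg hC.le h1) hD0nn]
            calc C * (Dγ * (x - y) ^ (γ - ρ)) = (C * Dγ) * (x - y) ^ (γ - ρ) := by ring
              _ ≤ S * (x - y) ^ (γ - ρ) := mul_le_mul_of_nonneg_right hbase htγ
          calc ENNReal.ofReal (C * y ^ γ * (D0 * (x - y) ^ (0 - ρ))) +
                ENNReal.ofReal (C * (Dγ * (x - y) ^ (γ - ρ)))
              ≤ ENNReal.ofReal (S * (x - y) ^ (0 - ρ)) +
                ENNReal.ofReal (S * (x - y) ^ (γ - ρ)) :=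
                add_le_add (ENNReal.ofReal_le_ofReal hc1) (ENNReal.ofReal_le_ofReal hc2)
            _ = E * philin γ ρ x y := by
                rw [philin, hEdef, mul_add, ← ENNReal.ofReal_mul hSnn,
                  ← ENNReal.ofReal_mul hSnn]
  -- Tonelli bound
  set M : ℝ := L ^ (1 - ρ) / (1 - ρ) + L ^ (1 + γ - ρ) / (1 + γ - ρ) with hMdef
  have hMnn : 0 ≤ M := by
    have h1 : (0:ℝ) ≤ L ^ (1 - ρ) := Real.rpow_nonneg hL.le _
    have h2 : (0:ℝ) ≤ L ^ (1 + γ - ρ) := Real.rpow_nonneg hL.le _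
    have h3 : (0:ℝ) < 1 - ρ := by linarith
    have h4 : (0:ℝ) < 1 + γ - ρ := by linarith
    positivity
  have hyint : ∀ y : ℝ, ∫⁻ x in Ioc (0:ℝ) L, psilin γ ρ E (x, y) ∂volume ≤
      (Ioc (0:ℝ) L).indicator (fun _ => E * ENNReal.ofReal M) y := by
    intro y
    by_cases hy : y ∈ Ioc (0:ℝ) L
    · rw [Set.indicator_of_mem hy]
      have hstep : ∀ x ∈ Ioc (0:ℝ) L, psilin γ ρ E (x, y) ≤
          (Ioc y L).indicator (fun x => E * philin γ ρ x y) x := by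
        intro x hx
        by_cases hcond : (0 < y ∧ y < x)
        · rw [psilin, Set.indicator_of_mem (show ((x, y) : ℝ × ℝ) ∈ _ from hcond),
            Set.indicator_of_mem (show x ∈ Ioc y L from ⟨hcond.2, hx.2⟩)]
        · rw [psilin, Set.indicator_of_notMem (show ((x, y) : ℝ × ℝ) ∉ _ from hcond)]
          exact zero_le
      calc ∫⁻ x in Ioc (0:ℝ) L, psilin γ ρ E (x, y) ∂volume
          ≤ ∫⁻ x in Ioc (0:ℝ) L,
              (Ioc y L).indicator (fun x => E * philin γ ρ x y) x ∂volume :=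
            setLIntegral_mono' measurableSet_Ioc hstep
        _ ≤ ∫⁻ x, (Ioc y L).indicator (fun x => E * philin γ ρ x y) x ∂volume :=
            setLIntegral_le_lintegral _ _
        _ = ∫⁻ x in Ioc y L, E * philin γ ρ x y ∂volume := by
            rw [lintegral_indicator measurableSet_Ioc]
        _ = E * ((∫⁻ x in Ioc y L, ENNReal.ofReal ((x - y) ^ (0 - ρ))) +
              (∫⁻ x in Ioc y L, ENNReal.ofReal ((x - y) ^ (γ - ρ)))) := by
            simp only [philin]
            rw [lintegral_const_mul' _ _ hEne, lintegral_add_left (by fun_prop)]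
        _ ≤ E * (ENNReal.ofReal (L ^ (1 - ρ) / (1 - ρ)) +
              ENNReal.ofReal (L ^ (1 + γ - ρ) / (1 + γ - ρ))) := by
            gcongr
            · refine le_trans (lint_Ioc_rpow (by linarith) y L hy.2)
                (ENNReal.ofReal_le_ofReal ?_)
              rw [show (0 - ρ + 1 : ℝ) = 1 - ρ by ring]
              have hnum : (L - y) ^ (1 - ρ) ≤ L ^ (1 - ρ) :=
                Real.rpow_le_rpow (by linarith [hy.1, hy.2]) (by linarith [hy.1, hy.2]) (by linarith)
              exact div_le_div_of_nonneg_right hnum (by linarith)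
            · refine le_trans (lint_Ioc_rpow (by linarith) y L hy.2)
                (ENNReal.ofReal_le_ofReal ?_)
              rw [show (γ - ρ + 1 : ℝ) = 1 + γ - ρ by ring]
              have hnum : (L - y) ^ (1 + γ - ρ) ≤ L ^ (1 + γ - ρ) :=
                Real.rpow_le_rpow (by linarith [hy.1, hy.2]) (by linarith [hy.1, hy.2]) (by linarith)
              exact div_le_div_of_nonneg_right hnum (by linarith)
        _ = E * ENNReal.ofReal M := by
            rw [hMdef, ENNReal.ofReal_add
              (div_nonneg (Real.rpow_nonneg hL.le _) (by linarith))
              (div_nonneg (Real.rpow_nonneg hL.le _) (by linarith))]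
    · rw [Set.indicator_of_notMem hy]
      have hzero : ∀ x ∈ Ioc (0:ℝ) L, psilin γ ρ E (x, y) = 0 := by
        intro x hx
        rw [psilin]
        refine Set.indicator_of_notMem ?_ _
        rintro ⟨hy0, hyx⟩
        exact hy ⟨hy0, le_trans hyx.le hx.2⟩
      calc ∫⁻ x in Ioc (0:ℝ) L, psilin γ ρ E (x, y) ∂volume
          ≤ ∫⁻ _ in Ioc (0:ℝ) L, 0 ∂volume :=
            setLIntegral_mono' measurableSet_Ioc fun x hx => (hzero x hx).le
        _ = 0 := by simp
  have hswap : ∫⁻ x in Ioc (0:ℝ) L, glin γ ρ E μ x ∂volume =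
      ∫⁻ y, ∫⁻ x in Ioc (0:ℝ) L, psilin γ ρ E (x, y) ∂volume ∂μ :=
    lintegral_lintegral_swap ((psilin_meas γ ρ E).aemeasurable)
  have hgfin : ∫⁻ x in Ioc (0:ℝ) L, glin γ ρ E μ x ∂volume ≤
      E * ENNReal.ofReal M * ENNReal.ofReal (L ^ (1 - ρ)) := by
    rw [hswap]
    calc ∫⁻ y, ∫⁻ x in Ioc (0:ℝ) L, psilin γ ρ E (x, y) ∂volume ∂μ
        ≤ ∫⁻ y, (Ioc (0:ℝ) L).indicator (fun _ => E * ENNReal.ofReal M) y ∂μ :=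
          lintegral_mono hyint
      _ = E * ENNReal.ofReal M * μ (Ioc (0:ℝ) L) := by
          rw [lintegral_indicator measurableSet_Ioc]
          simp [setLIntegral_const]
      _ ≤ E * ENNReal.ofReal M * ENNReal.ofReal (L ^ (1 - ρ)) := by
          gcongr
          exact le_trans (measure_mono Ioc_subset_Icc_self) (hbd L hL)
  set T : ℝ≥0∞ := E * ENNReal.ofReal M * ENNReal.ofReal (L ^ (1 - ρ)) with hTdef
  have hTne : T ≠ ⊤ :=
    ENNReal.mul_ne_top (ENNReal.mul_ne_top ENNReal.ofReal_ne_top ENNReal.ofReal_ne_top)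
      ENNReal.ofReal_ne_top
  -- a.e. domination
  have hAcount : {x : ℝ | 0 < μ {x}}.Countable := by
    have h := Measure.countable_meas_level_set_pos (μ := μ) (g := fun x : ℝ => x)
      measurable_id
    simpa using h
  have haeA : ∀ᵐ x : ℝ ∂volume, x ∉ {x : ℝ | 0 < μ {x}} :=
    measure_eq_zero_iff_ae_notMem.mp (hAcount.measure_zero _)
  have haebd : ∀ᵐ x : ℝ ∂volume, x ∈ Icc (0:ℝ) L →
      Ilin K μ x ≤ (Ioc (0:ℝ) L).indicator (glin γ ρ E μ) x := by
    filter_upwards [haeA] with x hxA hxI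
    by_cases hx : x ∈ Ioc (0:ℝ) L
    · rw [Set.indicator_of_mem hx]
      refine hpoint x hx ?_
      simpa using (not_lt.mp (fun h => hxA h))
    · have hx0 : x = 0 := by
        obtain ⟨h0, hL'⟩ := hxI
        by_contra hne
        exact hx ⟨lt_of_le_of_ne h0 (Ne.symm hne), hL'⟩
      rw [Set.indicator_of_notMem hx, hx0]
      simp [Ilin]
  have hIle : ∫⁻ x in Ioc (0:ℝ) L, Ilin K μ x ≤ T := by
    have h1 : ∫⁻ x in Ioc (0:ℝ) L, Ilin K μ x ≤
        ∫⁻ x in Ioc (0:ℝ) L, (Ioc (0:ℝ) L).indicator (glin γ ρ E μ) x := by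
      refine lintegral_mono_ae ?_
      filter_upwards [ae_restrict_mem measurableSet_Ioc, ae_restrict_of_ae haebd]
        with x hx h
      exact h (Ioc_subset_Icc_self hx)
    refine le_trans h1 ?_
    have h2 : ∫⁻ x in Ioc (0:ℝ) L, (Ioc (0:ℝ) L).indicator (glin γ ρ E μ) x =
        ∫⁻ x in Ioc (0:ℝ) L, glin γ ρ E μ x := by
      refine setLIntegral_congr_fun measurableSet_Ioc (fun x hx => ?_)
      exact Set.indicator_of_mem hx _
    rw [h2]
    exact hgfin
  constructor
  · exact ⟨T.toReal, by rw [ENNReal.ofReal_toReal hTne]; exact hIle⟩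
  · intro ε hε
    have hftot : ∫⁻ x, (Ioc (0:ℝ) L).indicator (glin γ ρ E μ) x ∂volume ≠ ⊤ := by
      rw [lintegral_indicator measurableSet_Ioc]
      exact ne_top_of_le_ne_top hTne hgfin
    obtain ⟨δ, hδ0, hδ⟩ :=
      exists_pos_setLIntegral_lt_of_measure_lt hftot (ENNReal.ofReal_pos.mpr hε).ne'
    have hmin_ne_top : min δ 1 ≠ ⊤ := ne_top_of_le_ne_top ENNReal.one_ne_top (min_le_right _ _)
    have hmin_pos : 0 < (min δ 1).toReal :=
      ENNReal.toReal_pos (lt_min hδ0 zero_lt_one).ne' hmin_ne_top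
    refine ⟨(min δ 1).toReal / 2, by positivity, ?_⟩
    intro B hBsub hBmeas hBvol
    have hBδ : volume B < δ := by
      calc volume B ≤ ENNReal.ofReal ((min δ 1).toReal / 2) := hBvol
        _ < ENNReal.ofReal ((min δ 1).toReal) :=
            (ENNReal.ofReal_lt_ofReal_iff hmin_pos).2 (by linarith)
        _ = min δ 1 := ENNReal.ofReal_toReal hmin_ne_top
        _ ≤ δ := min_le_left _ _
    have h2 : ∫⁻ x in B, Ilin K μ x ≤
        ∫⁻ x in B, (Ioc (0:ℝ) L).indicator (glin γ ρ E μ) x := by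
      refine lintegral_mono_ae ?_
      filter_upwards [ae_restrict_mem hBmeas, ae_restrict_of_ae haebd] with x hx h
      exact h (hBsub hx)
    exact le_trans h2 (hδ B hBδ).le

end Smol
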